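/- The subspace Π(h) = {(D^L,D^R) ∈ Der^L(h) ⊕ Der^R(h) | D^L α + D^R α ∈ Δ(h) for all α ∈ h} is a sub-Leibniz algebra of the semidirect product (Der^L(h) ⊕ Der^R(h), [·,·]_s), where Δ(h) = span{[α,α]_h}. -/
import Mathlib


variable {K : Type*} [Field K] {h : Type*} [AddCommGroup h] [Module K h]

/-- `Δ(h) = span{[α,α]_h : α ∈ h}`. -/
def squaresSpan (B : h →ₗ[K] h →ₗ[K] h) : Submodule K h :=
  Submodule.span K {b : h | ∃ a : h, b = B a a}

/-- Membership in `Π(h) ⊆ Der^L(h) ⊕ Der^R(h)`: `DL` is a left derivation,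
`DR` is a right derivation, and `DL α + DR α ∈ Δ(h)` for all `α`. -/
def InPi (B : h →ₗ[K] h →ₗ[K] h) (DL DR : Module.End K h) : Prop :=
  (∀ a b : h, DL (B a b) = B (DL a) b + B a (DL b)) ∧
  (∀ a b : h, DR (B a b) = B a (DR b) - B b (DR a)) ∧
  (∀ α : h, DL α + DR α ∈ squaresSpan B)

lemma sq_mem (B : h →ₗ[K] h →ₗ[K] h) (a : h) : B a a ∈ squaresSpan B :=
  Submodule.subset_span ⟨a, rfl⟩

lemma sym_mem (B : h →ₗ[K] h →ₗ[K] h) (x y : h) : B x y + B y x ∈ squaresSpan B := by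
  have : B x y + B y x = B (x + y) (x + y) - B x x - B y y := by
    simp [map_add, LinearMap.add_apply]; abel
  rw [this]
  exact Submodule.sub_mem _ (Submodule.sub_mem _ (sq_mem B _) (sq_mem B _)) (sq_mem B _)

lemma der_maps (B : h →ₗ[K] h →ₗ[K] h) (D : Module.End K h)
    (hD : ∀ a b : h, D (B a b) = B (D a) b + B a (D b)) :
    ∀ x ∈ squaresSpan B, D x ∈ squaresSpan B := by
  intro x hx
  induction hx using Submodule.span_induction with
  | mem x hx =>
    obtain ⟨a, rfl⟩ := hx
    rw [hD]
    exact sym_mem B _ _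
  | zero => simp
  | add x y _ _ hx hy => rw [map_add]; exact Submodule.add_mem _ hx hy
  | smul c x _ hx => rw [map_smul]; exact Submodule.smul_mem _ c hx

/-- Proposition 3.6: `Π(h)` is a sub-Leibniz algebra of the semidirect product
`(Der^L(h) ⊕ Der^R(h), [·,·]_s)`, i.e. it is closed under the bracket
`[(D^L₁,D^R₁),(D^L₂,D^R₂)]_s = (⁅D^L₁,D^L₂⁆, ⁅D^L₁,D^R₂⁆)`. -/
theorem Pi_sub_leibniz
    (B : h →ₗ[K] h →ₗ[K] h)
    (hleib : ∀ a b c : h, B a (B b c) = B (B a b) c + B b (B a c)) :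
    ∀ D1L D1R D2L D2R : Module.End K h,
      InPi B D1L D1R → InPi B D2L D2R → InPi B ⁅D1L, D2L⁆ ⁅D1L, D2R⁆ := by
  rintro D1L D1R D2L D2R ⟨h1L, h1R, h1Δ⟩ ⟨h2L, h2R, h2Δ⟩
  refine ⟨?_, ?_, ?_⟩
  · intro a b
    simp only [Ring.lie_def, LinearMap.sub_apply, Module.End.mul_apply]
    rw [h2L, map_add, h1L, h1L, h1L a b, map_add, h2L, h2L]
    simp only [map_add, map_smul, map_sub, LinearMap.add_apply, LinearMap.smul_apply,
      LinearMap.sub_apply]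
    abel
  · intro a b
    simp only [Ring.lie_def, LinearMap.sub_apply, Module.End.mul_apply]
    rw [h2R, map_sub, h1L, h1L, h1L a b, map_add, h2R, h2R]
    simp only [map_add, map_smul, map_sub, LinearMap.add_apply, LinearMap.smul_apply,
      LinearMap.sub_apply]
    abel
  · intro α
    have key : ⁅D1L, D2L⁆ α + ⁅D1L, D2R⁆ α
        = D1L (D2L α + D2R α) - (D2L (D1L α) + D2R (D1L α)) := by
      simp only [Ring.lie_def, LinearMap.sub_apply, Module.End.mul_apply, map_add, map_sub]
      abel
    rw [key]
    exact Submodule.sub_mem _ (der_maps B D1L h1L _ (h2Δ α)) (h2Δ (D1L α))
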